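/- The total variation distance between Binomial(m,p) and Poisson(μ) satisfies d_TV(Binom(m,p), Pois(μ)) ≤ mp² + ψ(μ − mp), where ψ(u) = e^{|u|}(1+|u|) − 1. -/

import Mathlib

open Finset

/-- `ψ(u) = e^{|u|}(1+|u|) - 1`. -/
noncomputable def psiTV (u : ℝ) : ℝ := Real.exp |u| * (1 + |u|) - 1

namespace Stmt13Aux

noncomputable def pois (l : ℝ) (k : ℕ) : ℝ := Real.exp (-l) * l ^ k / k.factorial

noncomputable def binom (m : ℕ) (p : ℝ) (k : ℕ) : ℝ :=
  if k ≤ m then (m.choose k : ℝ) * p ^ k * (1 - p) ^ (m - k) else 0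

noncomputable def conv (f g : ℕ → ℝ) (k : ℕ) : ℝ := ∑ j ∈ range (k + 1), f j * g (k - j)

lemma exp_tsum (x : ℝ) : ∑' k : ℕ, x ^ k / (k.factorial : ℝ) = Real.exp x := by
  rw [Real.exp_eq_exp_ℝ, NormedSpace.exp_eq_tsum_div]

lemma summable_expser (x : ℝ) : Summable (fun k : ℕ => x ^ k / (k.factorial : ℝ)) :=
  Real.summable_pow_div_factorial x

lemma pois_eq (l : ℝ) : pois l = fun k => Real.exp (-l) * (l ^ k / k.factorial) := by
  funext k; simp [pois, mul_div_assoc]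

lemma summable_pois (l : ℝ) : Summable (pois l) := by
  rw [pois_eq]; exact (summable_expser l).mul_left _

lemma tsum_pois (l : ℝ) : ∑' k, pois l k = 1 := by
  rw [pois_eq]
  rw [tsum_mul_left, exp_tsum, ← Real.exp_add]
  simp

lemma pois_nonneg {l : ℝ} (hl : 0 ≤ l) (k : ℕ) : 0 ≤ pois l k := by
  unfold pois
  positivity

lemma binom_eq (m : ℕ) (p : ℝ) (k : ℕ) :
    binom m p k = (m.choose k : ℝ) * p ^ k * (1 - p) ^ (m - k) := by
  unfold binom
  split
  · rfl
  · rename_i h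
    rw [Nat.choose_eq_zero_of_lt (by omega)]
    simp

lemma binom_nonneg {p : ℝ} (hp0 : 0 ≤ p) (hp1 : p ≤ 1) (m k : ℕ) : 0 ≤ binom m p k := by
  rw [binom_eq]
  have : (0:ℝ) ≤ 1 - p := by linarith
  positivity

lemma summable_binom (m : ℕ) (p : ℝ) : Summable (binom m p) := by
  apply summable_of_ne_finset_zero (s := range (m+1))
  intro k hk
  simp only [mem_range, not_lt] at hk
  unfold binom
  rw [if_neg (by omega)]

lemma tsum_binom (m : ℕ) (p : ℝ) : ∑' k, binom m p k = 1 := by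
  rw [tsum_eq_sum (s := range (m+1)) (by
    intro k hk
    simp only [mem_range, not_lt] at hk
    unfold binom; rw [if_neg (by omega)])]
  have := add_pow p (1 - p) m
  simp only [add_sub_cancel, one_pow] at this
  calc ∑ k ∈ range (m+1), binom m p k
      = ∑ k ∈ range (m+1), p ^ k * (1-p) ^ (m-k) * (m.choose k : ℝ) := by
        apply Finset.sum_congr rfl; intro k _; rw [binom_eq]; ring
    _ = 1 := by rw [← this]

lemma pois_conv (a b : ℝ) : conv (pois a) (pois b) = pois (a + b) := by
  funext k
  unfold conv pois
  have hap : ∀ j ∈ range (k+1),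
      Real.exp (-a) * a ^ j / j.factorial * (Real.exp (-b) * b ^ (k-j) / (k-j).factorial)
      = Real.exp (-(a+b)) / k.factorial * (a ^ j * b ^ (k-j) * (k.choose j : ℝ)) := by
    intro j hj
    simp only [mem_range] at hj
    have hjk : j ≤ k := by omega
    rw [Nat.cast_choose ℝ hjk]
    have h1 : (j.factorial : ℝ) ≠ 0 := by positivity
    have h2 : ((k-j).factorial : ℝ) ≠ 0 := by positivity
    have h3 : (k.factorial : ℝ) ≠ 0 := by positivity
    have he : Real.exp (-(a+b)) = Real.exp (-a) * Real.exp (-b) := by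
      rw [← Real.exp_add]; ring_nf
    rw [he]
    field_simp
  rw [Finset.sum_congr rfl hap, ← Finset.mul_sum, ← add_pow]
  ring

lemma binom_one_zero (p : ℝ) : binom 1 p 0 = 1 - p := by simp [binom_eq]
lemma binom_one_one (p : ℝ) : binom 1 p 1 = p := by simp [binom_eq]
lemma binom_one_ge (p : ℝ) (j : ℕ) (hj : 2 ≤ j) : binom 1 p j = 0 := by
  rw [binom_eq, Nat.choose_eq_zero_of_lt (by omega)]; simp

lemma binom_conv (m : ℕ) (p : ℝ) : conv (binom 1 p) (binom m p) = binom (m+1) p := by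
  funext k
  unfold conv
  match k with
  | 0 =>
    rw [Finset.sum_range_one]
    simp only [Nat.sub_zero, binom_one_zero]
    rw [binom_eq, binom_eq]
    simp only [Nat.choose_zero_right, Nat.cast_one, pow_zero, Nat.sub_zero, pow_succ]
    ring
  | Nat.succ k' =>
    have hsub : range 2 ⊆ range (k' + 1 + 1) := by
      apply range_subset_range.mpr; omega
    rw [← Finset.sum_subset hsub (by
      intro j _ hj
      simp only [mem_range, not_lt] at hj
      rw [binom_one_ge p j hj, zero_mul])]
    rw [show (2:ℕ) = 1 + 1 from rfl, Finset.sum_range_succ, Finset.sum_range_succ,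
      Finset.sum_range_zero, binom_one_zero, binom_one_one]
    simp only [Nat.sub_zero, Nat.add_sub_cancel, zero_add]
    rw [binom_eq, binom_eq, binom_eq]
    simp only [Nat.succ_eq_add_one, Nat.add_sub_cancel]
    have hc : ((m+1).choose (k'+1) : ℝ) = (m.choose k' : ℝ) + (m.choose (k'+1) : ℝ) := by
      rw [Nat.choose_succ_succ]; push_cast; ring
    rw [hc]
    rcases lt_trichotomy k' m with h | h | h
    · have h1 : m - k' = (m - (k'+1)) + 1 := by omega
      have h2 : m + 1 - (k'+1) = (m - (k'+1)) + 1 := by omega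
      rw [h1, h2, pow_succ]
      ring
    · subst h
      rw [Nat.choose_eq_zero_of_lt (by omega)]
      simp
      ring
    · have e1 : m.choose (k'+1) = 0 := Nat.choose_eq_zero_of_lt (by omega)
      have e2 : m.choose k' = 0 := Nat.choose_eq_zero_of_lt h
      rw [e1, e2]
      simp

lemma conv_bound (f f' g g' : ℕ → ℝ) (hf : Summable f) (hf' : Summable f')
    (hg : Summable g) (hg' : Summable g')
    (hgpos : ∀ k, 0 ≤ g k) (hf'pos : ∀ k, 0 ≤ f' k)
    (hgsum : (∑' k, g k) = 1) (hf'sum : (∑' k, f' k) = 1) :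
    ∑' k, |conv f g k - conv f' g' k| ≤ (∑' k, |f k - f' k|) + (∑' k, |g k - g' k|) := by
  set F : ℕ → ℝ := fun k => |f k - f' k| with hFdef
  set G : ℕ → ℝ := fun k => |g k - g' k| with hGdef
  have hF : Summable F := (hf.sub hf').abs
  have hG : Summable G := (hg.sub hg').abs
  have hFn : Summable (fun x => ‖F x‖) := by simpa [Real.norm_eq_abs] using hF.abs
  have hGn : Summable (fun x => ‖G x‖) := by simpa [Real.norm_eq_abs] using hG.abs
  have hgn : Summable (fun x => ‖g x‖) := by simpa [Real.norm_eq_abs] using hg.abs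
  have hf'n : Summable (fun x => ‖f' x‖) := by simpa [Real.norm_eq_abs] using hf'.abs
  have hFg : Summable (fun k => conv F g k) :=
    (summable_norm_sum_mul_range_of_summable_norm hFn hgn).of_norm
  have hf'G : Summable (fun k => conv f' G k) :=
    (summable_norm_sum_mul_range_of_summable_norm hf'n hGn).of_norm
  have hpt : ∀ k, |conv f g k - conv f' g' k| ≤ conv F g k + conv f' G k := by
    intro k
    unfold conv
    rw [← Finset.sum_sub_distrib, ← Finset.sum_add_distrib]
    refine (Finset.abs_sum_le_sum_abs _ _).trans (Finset.sum_le_sum ?_)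
    intro j _
    have h1 : f j * g (k-j) - f' j * g' (k-j)
        = (f j - f' j) * g (k-j) + f' j * (g (k-j) - g' (k-j)) := by ring
    rw [h1]
    refine (abs_add_le _ _).trans ?_
    rw [abs_mul, abs_mul, abs_of_nonneg (hgpos (k-j)), abs_of_nonneg (hf'pos j)]
  calc ∑' k, |conv f g k - conv f' g' k|
      ≤ ∑' k, (conv F g k + conv f' G k) := by
        refine Summable.tsum_le_tsum hpt ?_ (hFg.add hf'G)
        exact Summable.of_nonneg_of_le (fun k => abs_nonneg _) hpt (hFg.add hf'G)
    _ = (∑' k, conv F g k) + ∑' k, conv f' G k := Summable.tsum_add hFg hf'G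
    _ = (∑' k, F k) * (∑' k, g k) + (∑' k, f' k) * (∑' k, G k) := by
        rw [tsum_mul_tsum_eq_tsum_sum_range_of_summable_norm hFn hgn,
          tsum_mul_tsum_eq_tsum_sum_range_of_summable_norm hf'n hGn]
        rfl
    _ = (∑' k, F k) + ∑' k, G k := by rw [hgsum, hf'sum]; ring

lemma summable_diff (f g : ℕ → ℝ) (hf : Summable f) (hg : Summable g) :
    Summable (fun k => |f k - g k|) := (hf.sub hg).abs

lemma bern_base {p : ℝ} (hp0 : 0 ≤ p) (hp1 : p ≤ 1) :
    ∑' k, |binom 1 p k - pois p k| ≤ 2 * p ^ 2 := by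
  have hsum : Summable (fun k => |binom 1 p k - pois p k|) :=
    summable_diff _ _ (summable_binom 1 p) (summable_pois p)
  have hsump : Summable (pois p) := summable_pois p
  have e0 : pois p 0 = Real.exp (-p) := by simp [pois]
  have e1 : pois p 1 = Real.exp (-p) * p := by simp [pois]
  have htail : ∑' k, pois p (k + 2) = 1 - Real.exp (-p) - Real.exp (-p) * p := by
    have h1 := Summable.tsum_eq_zero_add hsump
    have h2 := Summable.tsum_eq_zero_add (((summable_nat_add_iff 1).mpr hsump))
    rw [tsum_pois] at h1
    have h3 : ∑' k, pois p (k + 1 + 1) = ∑' k, pois p (k + 2) := by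
      apply tsum_congr; intro k; norm_num
    rw [h3] at h2
    rw [h2, e0, e1] at h1
    linarith
  have hmain := Summable.tsum_eq_zero_add hsum
  have hmain2 := Summable.tsum_eq_zero_add ((summable_nat_add_iff 1).mpr hsum)
  have h3 : ∑' k, |binom 1 p (k + 1 + 1) - pois p (k + 1 + 1)| =
      ∑' k, pois p (k + 2) := by
    apply tsum_congr; intro k
    rw [binom_one_ge p (k+1+1) (by omega)]
    rw [abs_of_nonpos (by
      have := pois_nonneg hp0 (k+1+1)
      linarith)]
    have : k + 1 + 1 = k + 2 := by omega
    rw [this]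
    ring
  rw [h3] at hmain2
  rw [hmain2, binom_one_zero, binom_one_one, e0, e1, htail] at hmain
  rw [hmain]
  have hexp : 1 - p ≤ Real.exp (-p) := by
    have := Real.add_one_le_exp (-p); linarith
  have hle1 : Real.exp (-p) ≤ 1 := by
    rw [← Real.exp_zero]
    exact Real.exp_le_exp.mpr (by linarith)
  have hpos : 0 < Real.exp (-p) := Real.exp_pos _
  rw [abs_of_nonpos (by linarith), abs_of_nonneg (by nlinarith)]
  nlinarith

lemma pois_shift {l t : ℝ} (hl : 0 ≤ l) (ht : 0 ≤ t) :
    ∑' k, |pois l k - pois (l + t) k| ≤ 2 * t := by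
  set c1 : ℝ := Real.exp (-l) * Real.exp (-t) with hc1
  set c2 : ℝ := Real.exp (-l) * (1 - 2 * Real.exp (-t)) with hc2
  set bound : ℕ → ℝ := fun k =>
    c1 * ((l+t) ^ k / k.factorial) + c2 * (l ^ k / k.factorial) with hbdef
  have hsA : Summable (fun k : ℕ => (l+t) ^ k / (k.factorial : ℝ)) := summable_expser _
  have hsB : Summable (fun k : ℕ => l ^ k / (k.factorial : ℝ)) := summable_expser _
  have hsbound : Summable bound := (hsA.mul_left c1).add (hsB.mul_left c2)
  have het : Real.exp (-t) ≤ 1 := by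
    rw [← Real.exp_zero]; exact Real.exp_le_exp.mpr (by linarith)
  have het0 : 0 < Real.exp (-t) := Real.exp_pos _
  have hpt : ∀ k, |pois l k - pois (l + t) k| ≤ bound k := by
    intro k
    have hXY : l ^ k / (k.factorial : ℝ) ≤ (l+t) ^ k / (k.factorial : ℝ) := by
      gcongr
      all_goals linarith
    have hX : (0:ℝ) ≤ l ^ k / (k.factorial : ℝ) := by positivity
    have hd : pois l k - pois (l + t) k
        = Real.exp (-l) * (l ^ k / k.factorial - Real.exp (-t) * ((l+t) ^ k / k.factorial)) := by
      unfold pois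
      have he : Real.exp (-(l+t)) = Real.exp (-l) * Real.exp (-t) := by
        rw [← Real.exp_add]; ring_nf
      rw [he]
      ring
    rw [hd, abs_mul, abs_of_nonneg (le_of_lt (Real.exp_pos (-l)))]
    have hb : bound k = Real.exp (-l) *
        (Real.exp (-t) * ((l+t) ^ k / k.factorial - l ^ k / k.factorial)
          + (1 - Real.exp (-t)) * (l ^ k / k.factorial)) := by
      rw [hbdef, hc1, hc2]; ring
    rw [hb]
    have hexpl : (0:ℝ) < Real.exp (-l) := Real.exp_pos _
    apply mul_le_mul_of_nonneg_left _ (le_of_lt hexpl)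
    rw [abs_le]
    constructor
    · nlinarith
    · nlinarith
  have hLHS : Summable (fun k => |pois l k - pois (l + t) k|) :=
    summable_diff _ _ (summable_pois l) (summable_pois (l+t))
  have htsum : ∑' k, bound k = 2 * (1 - Real.exp (-t)) := by
    rw [hbdef]
    rw [Summable.tsum_add (hsA.mul_left c1) (hsB.mul_left c2), tsum_mul_left, tsum_mul_left,
      exp_tsum, exp_tsum, hc1, hc2]
    have h1 : Real.exp (-l) * Real.exp (l) = 1 := by
      rw [← Real.exp_add]; simp
    have h2 : Real.exp (-l) * Real.exp (-t) * Real.exp (l+t) = 1 := by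
      rw [← Real.exp_add, ← Real.exp_add, show -l + -t + (l+t) = 0 by ring, Real.exp_zero]
    nlinarith
  calc ∑' k, |pois l k - pois (l + t) k| ≤ ∑' k, bound k := Summable.tsum_le_tsum hpt hLHS hsbound
    _ = 2 * (1 - Real.exp (-t)) := htsum
    _ ≤ 2 * t := by
        have := Real.add_one_le_exp (-t)
        linarith

lemma lecam (m : ℕ) {p : ℝ} (hp0 : 0 ≤ p) (hp1 : p ≤ 1) :
    ∑' k, |binom m p k - pois (m * p) k| ≤ 2 * m * p ^ 2 := by
  induction m with
  | zero =>
    have : ∀ k, |binom 0 p k - pois ((0:ℕ) * p) k| = 0 := by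
      intro k
      rw [binom_eq]
      unfold pois
      push_cast
      rw [zero_mul, neg_zero, Real.exp_zero]
      match k with
      | 0 => norm_num
      | Nat.succ k' => simp [Nat.choose_eq_zero_of_lt]
    rw [tsum_congr this]
    simp
  | succ n ih =>
    have hconv1 : binom (n+1) p = conv (binom 1 p) (binom n p) := (binom_conv n p).symm
    have hconv2 : pois ((n+1 : ℕ) * p) = conv (pois p) (pois (n * p)) := by
      rw [pois_conv]
      push_cast
      ring_nf
    rw [hconv1, hconv2]
    have hb := conv_bound (binom 1 p) (pois p) (binom n p) (pois (n * p))
      (summable_binom 1 p) (summable_pois p) (summable_binom n p) (summable_pois (n*p))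
      (fun k => binom_nonneg hp0 hp1 n k) (pois_nonneg hp0) (tsum_binom n p) (tsum_pois p)
    refine hb.trans ?_
    have h1 := bern_base hp0 hp1
    have h2 := ih
    push_cast
    nlinarith

end Stmt13Aux

open Stmt13Aux in
theorem stmt_13 (m : ℕ) (p μ : ℝ) (hp0 : 0 ≤ p) (hp1 : p ≤ 1) (hμ : 0 ≤ μ) :
    (1 / 2) * ∑' k : ℕ,
        |(if k ≤ m then (m.choose k : ℝ) * p ^ k * (1 - p) ^ (m - k) else 0)
          - Real.exp (-μ) * μ ^ k / (k.factorial : ℝ)|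
      ≤ m * p ^ 2 + psiTV (μ - m * p) := by
  have hstmt : (∑' k : ℕ,
        |(if k ≤ m then (m.choose k : ℝ) * p ^ k * (1 - p) ^ (m - k) else 0)
          - Real.exp (-μ) * μ ^ k / (k.factorial : ℝ)|)
      = ∑' k, |binom m p k - pois μ k| := by
    apply tsum_congr; intro k; rfl
  rw [hstmt]
  have hmp : (0:ℝ) ≤ m * p := by positivity
  -- triangle inequality
  have htri : ∑' k, |binom m p k - pois μ k|
      ≤ (∑' k, |binom m p k - pois (m * p) k|) + ∑' k, |pois (m * p) k - pois μ k| := by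
    have hs1 : Summable (fun k => |binom m p k - pois (m*p) k|) :=
      summable_diff _ _ (summable_binom m p) (summable_pois _)
    have hs2 : Summable (fun k => |pois (m*p) k - pois μ k|) :=
      summable_diff _ _ (summable_pois _) (summable_pois _)
    have hs0 : Summable (fun k => |binom m p k - pois μ k|) :=
      summable_diff _ _ (summable_binom m p) (summable_pois _)
    calc ∑' k, |binom m p k - pois μ k|
        ≤ ∑' k, (|binom m p k - pois (m*p) k| + |pois (m*p) k - pois μ k|) := by
          refine Summable.tsum_le_tsum (fun k => ?_) hs0 (hs1.add hs2)
          exact (abs_sub_le _ _ _)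
      _ = _ := Summable.tsum_add hs1 hs2
  have hL := lecam m hp0 hp1
  have hshift : ∑' k, |pois (m * p) k - pois μ k| ≤ 2 * |μ - m * p| := by
    rcases le_total (m * p) μ with h | h
    · have := pois_shift (l := m * p) (t := μ - m * p) hmp (by linarith)
      rw [show (m:ℝ) * p + (μ - m * p) = μ by ring] at this
      rw [abs_of_nonneg (by linarith)]
      exact this
    · have := pois_shift (l := μ) (t := m * p - μ) hμ (by linarith)
      rw [show μ + ((m:ℝ) * p - μ) = m * p by ring] at this
      rw [abs_of_nonpos (by linarith)]
      have hsymm : ∑' k, |pois (m*p) k - pois μ k| = ∑' k, |pois μ k - pois (m*p) k| := by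
        apply tsum_congr; intro k; rw [abs_sub_comm]
      rw [hsymm]
      calc ∑' k, |pois μ k - pois (m*p) k| ≤ 2 * (m * p - μ) := this
        _ = 2 * -(μ - m * p) := by ring
  have hpsi : |μ - m * p| ≤ psiTV (μ - m * p) := by
    unfold psiTV
    set t := |μ - m * p| with htdef
    have ht0 : 0 ≤ t := abs_nonneg _
    have hexp : 1 + t ≤ Real.exp t := by
      have := Real.add_one_le_exp t; linarith
    nlinarith
  nlinarith [htri, hL, hshift, hpsi]
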